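/- Let (X, 𝒜, μ₀) be a probability space, N a natural number, ρ ≥ 0, and Φ : X × ℝ^N → ℝ a jointly measurable function such that Φ(x, y) ≥ 0 for all x and all ‖y‖ ≤ ρ, and |Φ(x, y₁) − Φ(x, y₂)| ≤ M·‖y₁ − y₂‖ for all x ∈ X and all y₁, y₂ with ‖y₁‖, ‖y₂‖ ≤ ρ, for some constant M ≥ 0. Then the normalization constant Z(y) := ∫_X exp(−Φ(x, y)) dμ₀(x) satisfies |Z(y₁) − Z(y₂)| ≤ M·‖y₁ − y₂‖ for all y₁, y₂ with ‖y₁‖, ‖y₂‖ ≤ ρ. (Lipschitz dependence of the normalization constant on the data, an intermediate step in the Hellinger well-posedness proof.) -/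
import Mathlib


open MeasureTheory

lemma exp_neg_lip {a b : ℝ} (ha : 0 ≤ a) (hb : 0 ≤ b) :
    |Real.exp (-a) - Real.exp (-b)| ≤ |a - b| := by
  wlog h : a ≤ b generalizing a b
  · rw [abs_sub_comm, abs_sub_comm a b]; exact this hb ha (le_of_not_ge h)
  have h1 : Real.exp (-b) ≤ Real.exp (-a) := Real.exp_le_exp.2 (by linarith)
  rw [abs_of_nonneg (by linarith), abs_of_nonpos (by linarith)]
  have : Real.exp (-a) - Real.exp (-b) = Real.exp (-a) * (1 - Real.exp (a - b)) := by
    rw [mul_sub, mul_one, ← Real.exp_add]; ring_nf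
  rw [this]
  have hea : Real.exp (-a) ≤ 1 := Real.exp_le_one_iff.2 (by linarith)
  have h2 : 1 - Real.exp (a - b) ≤ b - a := by
    have := Real.add_one_le_exp (a - b); linarith
  have h3 : 0 ≤ 1 - Real.exp (a - b) := by
    have : Real.exp (a - b) ≤ 1 := Real.exp_le_one_iff.2 (by linarith)
    linarith
  calc Real.exp (-a) * (1 - Real.exp (a - b)) ≤ 1 * (1 - Real.exp (a - b)) := by
        exact mul_le_mul_of_nonneg_right hea h3
    _ ≤ b - a := by linarith
    _ = -(a - b) := by ring

/-- Lipschitz dependence of the normalization constant `Z(y) = ∫ exp(-Φ(x,y)) dμ₀`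
on the data, an intermediate step in the Hellinger well-posedness proof. -/
theorem normalization_constant_lipschitz
    {X : Type*} [MeasurableSpace X] (μ₀ : Measure X) [IsProbabilityMeasure μ₀]
    (N : ℕ) (ρ : ℝ) (hρ : 0 ≤ ρ)
    (Φ : X → EuclideanSpace ℝ (Fin N) → ℝ)
    (hΦmeas : Measurable fun p : X × EuclideanSpace ℝ (Fin N) => Φ p.1 p.2)
    (hΦnonneg : ∀ (x : X) (y : EuclideanSpace ℝ (Fin N)), ‖y‖ ≤ ρ → 0 ≤ Φ x y)
    (M : ℝ) (hM : 0 ≤ M)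
    (hlip : ∀ (x : X) (y₁ y₂ : EuclideanSpace ℝ (Fin N)), ‖y₁‖ ≤ ρ → ‖y₂‖ ≤ ρ →
      |Φ x y₁ - Φ x y₂| ≤ M * ‖y₁ - y₂‖) :
    ∀ y₁ y₂ : EuclideanSpace ℝ (Fin N), ‖y₁‖ ≤ ρ → ‖y₂‖ ≤ ρ →
      |(∫ x, Real.exp (-Φ x y₁) ∂μ₀) - ∫ x, Real.exp (-Φ x y₂) ∂μ₀| ≤
        M * ‖y₁ - y₂‖ := by
  intro y₁ y₂ h₁ h₂
  have hmeas : ∀ y : EuclideanSpace ℝ (Fin N), Measurable fun x => Real.exp (-Φ x y) := by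
    intro y
    exact (Real.measurable_exp.comp
      ((hΦmeas.comp (measurable_id.prodMk measurable_const)).neg))
  have hint : ∀ y : EuclideanSpace ℝ (Fin N), ‖y‖ ≤ ρ →
      Integrable (fun x => Real.exp (-Φ x y)) μ₀ := by
    intro y hy
    refine Integrable.mono' (integrable_const 1) (hmeas y).aestronglyMeasurable ?_
    filter_upwards with x
    rw [Real.norm_eq_abs, abs_of_nonneg (Real.exp_nonneg _)]
    exact Real.exp_le_one_iff.2 (by linarith [hΦnonneg x y hy])
  rw [← integral_sub (hint y₁ h₁) (hint y₂ h₂)]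
  calc |∫ x, (Real.exp (-Φ x y₁) - Real.exp (-Φ x y₂)) ∂μ₀|
      ≤ ∫ x, |Real.exp (-Φ x y₁) - Real.exp (-Φ x y₂)| ∂μ₀ :=
        by simpa [Real.norm_eq_abs] using norm_integral_le_integral_norm (fun x => Real.exp (-Φ x y₁) - Real.exp (-Φ x y₂))
    _ ≤ ∫ _x, M * ‖y₁ - y₂‖ ∂μ₀ := by
        refine integral_mono_of_nonneg (Filter.Eventually.of_forall fun x => abs_nonneg _)
          (integrable_const _) (Filter.Eventually.of_forall fun x => ?_)
        exact le_trans (exp_neg_lip (hΦnonneg x y₁ h₁) (hΦnonneg x y₂ h₂))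
          (hlip x y₁ y₂ h₁ h₂)
    _ = M * ‖y₁ - y₂‖ := by simp
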